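/- Let R = ℚ + xℝ[x], the subring of ℝ[x] consisting of polynomials with rational constant term. Then ℝ[x] is not flat as an R-module. -/

import Mathlib

open Polynomial

/-- for `R = ℚ + xℝ[x]` (polynomials over `ℝ` with rational constant
term), `ℝ[x]` is not flat as an `R`-module. -/
theorem stmt_12 :
    ¬ Module.Flat
        ↥(Subring.comap (Polynomial.constantCoeff (R := ℝ))
            (algebraMap ℚ ℝ).range)
        (Polynomial ℝ) := by
  intro hflat
  set S := Subring.comap (Polynomial.constantCoeff (R := ℝ)) (algebraMap ℚ ℝ).range with hS
  have hXmem : (X : Polynomial ℝ) ∈ S := by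
    simp only [hS, Subring.mem_comap, constantCoeff_apply, coeff_X_zero]
    exact ⟨0, by simp⟩
  have h2mem : (C (Real.sqrt 2) * X : Polynomial ℝ) ∈ S := by
    simp only [hS, Subring.mem_comap, constantCoeff_apply, coeff_mul_X_zero]
    exact ⟨0, by simp⟩
  set f : Fin 2 → S := ![⟨X, hXmem⟩, ⟨C (Real.sqrt 2) * X, h2mem⟩] with hf
  set x : Fin 2 → Polynomial ℝ := ![C (Real.sqrt 2), -1] with hx
  have hrel : ∑ i, f i • x i = 0 := by
    rw [Fin.sum_univ_two]
    show (X : Polynomial ℝ) * C (Real.sqrt 2) + (C (Real.sqrt 2) * X) * (-1) = 0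
    ring
  obtain ⟨κ, a, y, hxy, ha⟩ := Module.Flat.isTrivialRelation_of_sum_smul_eq_zero hrel
  have key : ∀ j, constantCoeff (R := ℝ) (a 0 j : Polynomial ℝ) = 0 := by
    intro j
    have h := ha j
    rw [Fin.sum_univ_two] at h
    have h' : (X : Polynomial ℝ) * (a 0 j : Polynomial ℝ)
        + (C (Real.sqrt 2) * X) * (a 1 j : Polynomial ℝ) = 0 := by
      have := congrArg (Subring.subtype S) h
      simpa [hf] using this
    have h'' : (X : Polynomial ℝ) *
        ((a 0 j : Polynomial ℝ) + C (Real.sqrt 2) * (a 1 j : Polynomial ℝ)) = 0 := by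
      linear_combination h'
    have h3 : (a 0 j : Polynomial ℝ) + C (Real.sqrt 2) * (a 1 j : Polynomial ℝ) = 0 :=
      (mul_eq_zero.mp h'').resolve_left X_ne_zero
    have h4 := congrArg (constantCoeff (R := ℝ)) h3
    simp only [map_add, map_mul, constantCoeff_apply, coeff_C_zero, map_zero] at h4
    obtain ⟨q0, hq0⟩ := (a 0 j).2
    obtain ⟨q1, hq1⟩ := (a 1 j).2
    rw [constantCoeff_apply] at hq0 hq1 ⊢
    rw [← hq0, ← hq1, eq_ratCast (algebraMap ℚ ℝ) q0, eq_ratCast (algebraMap ℚ ℝ) q1] at h4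
    rw [← hq0, eq_ratCast (algebraMap ℚ ℝ) q0]
    have hq1z : (q1 : ℝ) = 0 := by
      by_contra hne
      apply irrational_sqrt_two
      refine ⟨-q0 / q1, ?_⟩
      push_cast
      field_simp
      linarith
    rw [hq1z, mul_zero, add_zero] at h4
    exact h4
  have hx0 := hxy 0
  have hsqrt : Real.sqrt 2 = 0 := by
    have h5 := congrArg (constantCoeff (R := ℝ)) hx0
    have hxval : x 0 = C (Real.sqrt 2) := rfl
    rw [hxval, constantCoeff_apply, coeff_C_zero] at h5
    rw [h5, map_sum]
    refine Finset.sum_eq_zero fun j _ ↦ ?_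
    show constantCoeff ((a 0 j : Polynomial ℝ) * y j) = 0
    rw [map_mul, key j, zero_mul]
  have : (0:ℝ) < Real.sqrt 2 := Real.sqrt_pos.mpr (by norm_num)
  linarith
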